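/- Consider the cyclic rank-3 system with contents q₁, q₂, q₃ and contexts c¹ (measuring q₁, q₂), c² (measuring q₂, q₃), c³ (measuring q₃, q₁), whose bunches are: in c¹ the uniform distribution on {(1,1), (−1,−1)}, in c² the uniform distribution on {(1,1), (−1,−1)}, and in c³ the uniform distribution on {(1,−1), (−1,1)}. This system is simply consistently connected, and its noncontextual fraction is α_max = 0: every identically connected α-coupling has total mass α = 0 (the system is strongly contextual). -/

import Mathlib

abbrev Sgn : Type := ({-1, 1} : Finset ℤ)

def one : Sgn := ⟨1, by decide⟩

structure FDist (X : Type) [Fintype X] where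
  m : X → ℝ
  nonneg : ∀ x, 0 ≤ m x
  total : ∑ x, m x = 1

def push {X Y : Type} [Fintype X] [DecidableEq Y] (p : X → ℝ) (f : X → Y) : Y → ℝ :=
  fun y => ∑ x, if f x = y then p x else 0

section Systems

variable {Q C : Type} [Fintype Q] [Fintype C] [DecidableEq Q] [DecidableEq C]

abbrev Glob (pre : Q → C → Bool) : Type := {qc : Q × C // pre qc.1 qc.2}

def restr (pre : Q → C → Bool) (c : C) (f : Glob pre → Sgn) : {q : Q // pre q c} → Sgn :=
  fun q => f ⟨(q.1, c), q.2⟩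

variable (pre : Q → C → Bool) (R : (c : C) → FDist ({q : Q // pre q c} → Sgn))

def IsCoupling (T : FDist (Glob pre → Sgn)) : Prop :=
  ∀ c : C, push T.m (restr pre c) = (R c).m

def marg (c : C) (q : Q) (h : pre q c) : Sgn → ℝ :=
  push (R c).m (fun f => f ⟨q, h⟩)

def SimplyCC : Prop :=
  ∀ (q : Q) (c c' : C) (h : pre q c) (h' : pre q c'), marg pre R c q h = marg pre R c' q h'

def StronglyCC : Prop :=
  ∀ c c' : C,
    push (R c).m (fun f (q : {q : Q // pre q c ∧ pre q c'}) => f ⟨q.1, q.2.1⟩)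
    = push (R c').m (fun f (q : {q : Q // pre q c ∧ pre q c'}) => f ⟨q.1, q.2.2⟩)

def prAgree (T : FDist (Glob pre → Sgn)) (q : Q) (c c' : C) (h : pre q c) (h' : pre q c') : ℝ :=
  ∑ f, if f ⟨(q, c), h⟩ = f ⟨(q, c'), h'⟩ then T.m f else 0

def IdConn (T : FDist (Glob pre → Sgn)) : Prop :=
  ∀ (q : Q) (c c' : C) (h : pre q c) (h' : pre q c'), prAgree pre T q c c' h h' = 1

def IsAlphaCoupling (s : (Glob pre → Sgn) → ℝ) (α : ℝ) : Prop :=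
  (∀ f, 0 ≤ s f) ∧ (∑ f, s f = α) ∧
  ∀ (c : C) (g : {q : Q // pre q c} → Sgn), push s (restr pre c) g ≤ (R c).m g

def IdConnSub (s : (Glob pre → Sgn) → ℝ) : Prop :=
  ∀ (q : Q) (c c' : C) (h : pre q c) (h' : pre q c'),
    (∑ f, if f ⟨(q, c), h⟩ ≠ f ⟨(q, c'), h'⟩ then s f else 0) = 0

end Systems

/-- The is-measured-in relation of the cyclic rank-3 system: context c measures
contents c and c + 1. -/
def pre3 : Fin 3 → Fin 3 → Bool := fun q c => decide (q = c ∨ q = c + 1)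

lemma sum_half {X : Type} [Fintype X] (P : X → Prop) [DecidablePred P]
    (h : (Finset.univ.filter P).card = 1) :
    ∑ x, (if P x then (1/2:ℝ) else 0) = 1/2 := by
  rw [Finset.sum_ite, Finset.sum_const, Finset.sum_const_zero, add_zero, nsmul_eq_mul, h]
  norm_num

/-- The cyclic rank-3 system whose bunches are uniform on equal pairs in contexts 0
and 1 and uniform on unequal pairs in context 2 (a Popescu–Rohrlich-type box) is
simply consistently connected, and every identically connected α-coupling of it has
total mass α = 0: its noncontextual fraction is 0 (the system is strongly
contextual). -/
theorem stmt14 (R : (c : Fin 3) → FDist ({q : Fin 3 // pre3 q c} → Sgn))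
    (h0 : ∀ f : {q : Fin 3 // pre3 q 0} → Sgn,
      (R 0).m f = if ∀ x y, f x = f y then 1/2 else 0)
    (h1 : ∀ f : {q : Fin 3 // pre3 q 1} → Sgn,
      (R 1).m f = if ∀ x y, f x = f y then 1/2 else 0)
    (h2 : ∀ f : {q : Fin 3 // pre3 q 2} → Sgn,
      (R 2).m f = if ∀ x y, f x = f y then 0 else 1/2) :
    SimplyCC pre3 R ∧
    ∀ (s : (Glob pre3 → Sgn) → ℝ) (α : ℝ),
      IsAlphaCoupling pre3 R s α → IdConnSub pre3 s → α = 0 := by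
  constructor
  · -- simply consistently connected: every single-variable marginal is uniform
    have flip : ∀ (p : Prop) (inst : Decidable p),
        (if p then (0:ℝ) else 1/2) = if ¬p then 1/2 else 0 := by
      intro p inst; by_cases hp : p <;> simp [hp]
    have mh0 : ∀ (q : Fin 3) (hq : pre3 q 0) (v : Sgn), marg pre3 R 0 q hq v = 1/2 := by
      intro q hq v
      fin_cases q <;>
        first
          | exact absurd hq (by decide)
          | (fin_cases v <;>
              (simp only [marg, push, h0, ← ite_and]
               exact sum_half _ (of_decide_eq_true rfl)))
    have mh1 : ∀ (q : Fin 3) (hq : pre3 q 1) (v : Sgn), marg pre3 R 1 q hq v = 1/2 := by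
      intro q hq v
      fin_cases q <;>
        first
          | exact absurd hq (by decide)
          | (fin_cases v <;>
              (simp only [marg, push, h1, ← ite_and]
               exact sum_half _ (of_decide_eq_true rfl)))
    have mh2 : ∀ (q : Fin 3) (hq : pre3 q 2) (v : Sgn), marg pre3 R 2 q hq v = 1/2 := by
      intro q hq v
      fin_cases q <;>
        first
          | exact absurd hq (by decide)
          | (fin_cases v <;>
              (simp only [marg, push, h2, flip, ← ite_and]
               exact sum_half _ (of_decide_eq_true rfl)))
    have mh : ∀ (c q : Fin 3) (h : pre3 q c) (v : Sgn), marg pre3 R c q h v = 1/2 := by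
      intro c q h v
      fin_cases c
      exacts [mh0 q h v, mh1 q h v, mh2 q h v]
    intro q c c' h h'
    funext v
    rw [mh, mh]
  · rintro s α ⟨hnn, hsum, hmaj⟩ hid
    subst hsum
    apply Finset.sum_eq_zero
    intro f _
    by_contra hne0
    have hpos : 0 < s f := lt_of_le_of_ne (hnn f) (Ne.symm hne0)
    -- on the support, values agree across contexts
    have key : ∀ (q c c' : Fin 3) (h : pre3 q c) (h' : pre3 q c'),
        f ⟨(q, c), h⟩ = f ⟨(q, c'), h'⟩ := by
      intro q c c' h h'
      by_contra hne
      have h' := (Finset.sum_eq_zero_iff_of_nonneg (by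
        intro i _
        split
        · exact hnn i
        · exact le_rfl)).mp (hid q c c' h h') f (Finset.mem_univ f)
      rw [if_pos hne] at h'
      exact hne0 h'
    -- s f is bounded by the bunch probability of the restriction
    have bound : ∀ c : Fin 3, s f ≤ (R c).m (restr pre3 c f) := by
      intro c
      refine le_trans ?_ (hmaj c (restr pre3 c f))
      have : s f = (if restr pre3 c f = restr pre3 c f then s f else 0) := by simp
      rw [this]
      exact Finset.single_le_sum (f := fun f' => if restr pre3 c f' = restr pre3 c f then s f' else 0)
        (fun i _ => by split; exacts [hnn i, le_rfl]) (Finset.mem_univ f)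
    have const0 : ∀ x y : {q : Fin 3 // pre3 q 0}, restr pre3 0 f x = restr pre3 0 f y := by
      by_contra hc
      have hb := bound 0
      rw [h0 (restr pre3 0 f), if_neg hc] at hb
      linarith
    have const1 : ∀ x y : {q : Fin 3 // pre3 q 1}, restr pre3 1 f x = restr pre3 1 f y := by
      by_contra hc
      have hb := bound 1
      rw [h1 (restr pre3 1 f), if_neg hc] at hb
      linarith
    have nconst2 : ¬ ∀ x y : {q : Fin 3 // pre3 q 2}, restr pre3 2 f x = restr pre3 2 f y := by
      intro hc
      have hb := bound 2
      rw [h2 (restr pre3 2 f), if_pos hc] at hb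
      linarith
    apply nconst2
    have he : f ⟨(2, 2), by decide⟩ = f ⟨(0, 2), by decide⟩ := by
      calc f ⟨(2, 2), by decide⟩ = f ⟨(2, 1), by decide⟩ := key 2 2 1 (by decide) (by decide)
        _ = f ⟨(1, 1), by decide⟩ := (const1 ⟨1, by decide⟩ ⟨2, by decide⟩).symm
        _ = f ⟨(1, 0), by decide⟩ := key 1 1 0 (by decide) (by decide)
        _ = f ⟨(0, 0), by decide⟩ := (const0 ⟨0, by decide⟩ ⟨1, by decide⟩).symm
        _ = f ⟨(0, 2), by decide⟩ := key 0 0 2 (by decide) (by decide)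
    have hval : ∀ x : {q : Fin 3 // pre3 q 2}, restr pre3 2 f x = f ⟨(2, 2), by decide⟩ := by
      rintro ⟨q, hq⟩
      fin_cases q
      · exact he.symm
      · exact absurd hq (by decide)
      · rfl
    intro x y
    rw [hval x, hval y]
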